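/- Let y be a stationary strategy such that U¹(μ₀,y) ≥ U¹(μ,y) for every μ ∈ M(m). Then for every ε > 0 there exists a stationary strategy ỹ with ‖ỹ − y‖ < ε such that ỹ is one-to-one (ỹ(·|s) ≠ ỹ(·|s') whenever s ≠ s') and U¹(μ₀,ỹ) ≥ U¹(μ,ỹ) for every μ ∈ M(m). -/

import Mathlib

/-- `μ` is a probability distribution on `S × S` whose two marginals both equal `m`. -/
def IsCopula {S : Type*} [Fintype S] (m : S → ℝ) (μ : S × S → ℝ) : Prop :=
  (∀ q, 0 ≤ μ q) ∧ (∑ q : S × S, μ q = 1) ∧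
    (∀ s, ∑ a, μ (s, a) = m s) ∧ (∀ a, ∑ s, μ (s, a) = m a)

/-- The diagonal copula `μ₀`. -/
def mu0 {S : Type*} [DecidableEq S] (m : S → ℝ) : S × S → ℝ :=
  fun q => if q.1 = q.2 then m q.1 else 0

/-- `y` is a stationary strategy: each `y a` is a probability distribution on `B`. -/
def IsStrategy {S B : Type*} [Fintype B] (y : S → B → ℝ) : Prop :=
  (∀ a b, 0 ≤ y a b) ∧ ∀ a, ∑ b, y a b = 1

/-- `U(μ, y) = Σ_{(s,a)} μ(s,a) Σ_b y(b|a) u(s,b)`. -/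
def Upay {S B : Type*} [Fintype S] [Fintype B]
    (u : S × B → ℝ) (μ : S × S → ℝ) (y : S → B → ℝ) : ℝ :=
  ∑ s, ∑ a, μ (s, a) * ∑ b, y a b * u (s, b)

set_option maxHeartbeats 1000000 in
theorem stmt10 {S B : Type*} [Fintype S] [DecidableEq S] [Nonempty S]
    [Fintype B] [Nontrivial B]
    (m : S → ℝ) (hm : ∀ s, 0 < m s) (hm1 : ∑ s, m s = 1)
    (u1 : S × B → ℝ)
    (y : S → B → ℝ) (hy : IsStrategy y)
    (hC1 : ∀ μ : S × S → ℝ, IsCopula m μ → Upay u1 μ y ≤ Upay u1 (mu0 m) y)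
    (ε : ℝ) (hε : 0 < ε) :
    ∃ y' : S → B → ℝ, IsStrategy y' ∧ ‖y' - y‖ < ε ∧ Function.Injective y' ∧
      ∀ μ : S × S → ℝ, IsCopula m μ → Upay u1 μ y' ≤ Upay u1 (mu0 m) y' := by
  classical
  obtain ⟨b1, b2, hb12⟩ := exists_pair_ne B
  have hb21 : b2 ≠ b1 := Ne.symm hb12
  set Bn : ℝ := (Fintype.card B : ℝ) with hBndef
  have hBn1 : (1:ℝ) ≤ Bn := Nat.one_le_cast.mpr Fintype.card_pos
  have hBn0 : (0:ℝ) < Bn := lt_of_lt_of_le one_pos hBn1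
  -- centered payoff vectors
  set ub : S → ℝ := fun s => (∑ b, u1 (s, b)) / Bn with hubdef
  set ut : S → B → ℝ := fun s b => u1 (s, b) - ub s with hutdef
  have hutsum : ∀ s, ∑ b, ut s b = 0 := by
    intro s
    simp only [hutdef, Finset.sum_sub_distrib, Finset.sum_const, Finset.card_univ,
      nsmul_eq_mul]
    rw [hubdef]
    field_simp
    rw [← hBndef]; ring
  have hpoint : ∀ v : B → ℝ, (∑ b, v b = 0) → ∀ s,
      ∑ b, v b * u1 (s, b) = ∑ b, v b * ut s b := by
    intro v hv s
    have h1 : ∑ b, v b * u1 (s, b) - ∑ b, v b * ut s b = ∑ b, v b * ub s := by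
      rw [← Finset.sum_sub_distrib]
      refine Finset.sum_congr rfl fun b _ => ?_
      simp only [hutdef]; ring
    have h2 : ∑ b, v b * ub s = 0 := by
      rw [← Finset.sum_mul, hv, zero_mul]
    linarith
  -- ζ vector
  set ζ : B → ℝ := fun b => (if b = b1 then (1:ℝ) else 0) - (if b = b2 then (1:ℝ) else 0)
    with hζdef
  have hζsum : ∑ b, ζ b = 0 := by
    simp [hζdef, Finset.sum_sub_distrib]
  have hζval : ∀ v : B → ℝ, ∑ b, ζ b * v b = v b1 - v b2 := by
    intro v
    have h : ∀ b, ζ b * v b = (if b = b1 then v b else 0) - (if b = b2 then v b else 0) := by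
      intro b
      by_cases h1 : b = b1 <;> by_cases h2 : b = b2 <;>
        simp [hζdef, h1, h2, hb12, hb21] <;>
        first
          | ring
          | (exact absurd (h1.symm.trans h2) hb12)
    rw [Finset.sum_congr rfl fun b _ => h b, Finset.sum_sub_distrib]
    simp
  have hζabs : ∀ b, |ζ b| ≤ 1 := by
    intro b
    by_cases h1 : b = b1 <;> by_cases h2 : b = b2 <;>
      simp [hζdef, h1, h2, hb12, hb21] <;>
      try exact absurd (h1.symm.trans h2) hb12
  -- bound on ut
  set M1 : ℝ := ∑ s, ∑ b, |ut s b| with hM1def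
  have hM1nn : 0 ≤ M1 := Finset.sum_nonneg fun s _ => Finset.sum_nonneg fun b _ => abs_nonneg _
  have hM1 : ∀ s b, |ut s b| ≤ M1 := by
    intro s b
    calc |ut s b| ≤ ∑ b', |ut s b'| :=
          Finset.single_le_sum (f := fun b' => |ut s b'|)
            (fun b' _ => abs_nonneg _) (Finset.mem_univ b)
      _ ≤ M1 := Finset.single_le_sum (f := fun s => ∑ b', |ut s b'|)
          (fun s _ => Finset.sum_nonneg fun b' _ => abs_nonneg _) (Finset.mem_univ s)
  -- squared distances
  set D2 : S → S → ℝ := fun s x => ∑ b, (ut s b - ut x b)^2 with hD2def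
  have hD2nn : ∀ s x, 0 ≤ D2 s x := fun s x => Finset.sum_nonneg fun b _ => sq_nonneg _
  have hSne : (Finset.univ : Finset (S × S)).Nonempty := Finset.univ_nonempty
  set δ0 : ℝ := Finset.univ.inf' hSne
      (fun p : S × S => if D2 p.1 p.2 = 0 then 1 else D2 p.1 p.2) with hδ0def
  have hδ0pos : 0 < δ0 := by
    rw [hδ0def, Finset.lt_inf'_iff]
    intro p _
    by_cases h : D2 p.1 p.2 = 0
    · simp [h]
    · simp only [h, if_false]
      exact lt_of_le_of_ne (hD2nn _ _) (Ne.symm h)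
  have hδ0le : ∀ s x, D2 s x ≠ 0 → δ0 ≤ D2 s x := by
    intro s x h
    have h2 := Finset.inf'_le (f := fun p : S × S => if D2 p.1 p.2 = 0 then 1 else D2 p.1 p.2)
      (b := (s, x)) (Finset.mem_univ _)
    rw [hδ0def]
    exact h2.trans (le_of_eq (by simp [h]))
  -- constants
  set t : ℝ := min ε 1 / 2 with htdef
  have ht0 : 0 < t := by rw [htdef]; exact div_pos (lt_min hε one_pos) two_pos
  have htε : t ≤ ε / 2 := by
    rw [htdef]; have := min_le_left ε 1; linarith
  have ht1 : t ≤ 1 / 2 := by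
    rw [htdef]; have := min_le_right ε 1; linarith
  set β : ℝ := min (t / Bn) (ε / 4) with hβdef
  have hβ0 : 0 < β := lt_min (div_pos ht0 hBn0) (by linarith)
  have hβt : β ≤ t / Bn := min_le_left _ _
  have hβε : β ≤ ε / 4 := min_le_right _ _
  set τ : ℝ := β / (2 * (M1 + 1)) with hτdef
  have hτ0 : 0 < τ := by rw [hτdef]; positivity
  have hτM : τ * M1 ≤ β / 2 := by
    rw [hτdef, div_mul_eq_mul_div, div_le_div_iff₀ (by positivity) two_pos]
    nlinarith
  set C : ℝ := min (τ * δ0 / (8 * M1 + 1)) (β / 2) with hCdef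
  have hC0 : 0 < C := lt_min (by positivity) (by positivity)
  have hCβ : C ≤ β / 2 := min_le_right _ _
  have hCM : C * (4 * M1) ≤ τ * δ0 / 2 := by
    have h1 : C ≤ τ * δ0 / (8 * M1 + 1) := min_le_left _ _
    have h2 : C * (4 * M1) ≤ τ * δ0 / (8 * M1 + 1) * (4 * M1) :=
      mul_le_mul_of_nonneg_right h1 (by linarith)
    have h3 : τ * δ0 / (8 * M1 + 1) * (4 * M1) ≤ τ * δ0 / 2 := by
      rw [div_mul_eq_mul_div, div_le_div_iff₀ (by linarith) two_pos]
      nlinarith [mul_nonneg hτ0.le hδ0pos.le]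
    linarith
  -- the enumeration of S
  set nn : S → ℕ := fun x => ((Fintype.equivFin S) x : ℕ) with hnndef
  have hnninj : Function.Injective nn := by
    intro a b h
    exact (Fintype.equivFin S).injective (Fin.val_injective h)
  set nS : ℝ := (Fintype.card S : ℝ) with hnSdef
  have hnS0 : (0:ℝ) < nS := Nat.cast_pos.mpr Fintype.card_pos
  have hnnle : ∀ x, (nn x : ℝ) ≤ nS := by
    intro x
    rw [hnSdef]
    exact_mod_cast le_of_lt (Fin.is_lt _)
  -- the λ-free part of the new strategy
  set w : S → B → ℝ := fun x b => (1 - t) * y x b + t / Bn + τ * ut x b with hwdef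
  -- bad λ values
  set Bad : Finset ℝ := Finset.univ.image
      (fun p : S × S => (w p.2 b1 - w p.1 b1) / ((nn p.1 : ℝ) - (nn p.2 : ℝ))) with hBaddef
  have hIoo : (Set.Ioo (0:ℝ) (C / nS)).Infinite := Set.Ioo_infinite (by positivity)
  obtain ⟨lam, hlam⟩ := (hIoo.diff (Bad.finite_toSet)).nonempty
  obtain ⟨⟨hlam0, hlamlt⟩, hlamBad⟩ := hlam
  have hlamnn : ∀ x, 0 ≤ lam * (nn x : ℝ) := fun x =>
    mul_nonneg hlam0.le (Nat.cast_nonneg _)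
  have hlamC : ∀ x, lam * (nn x : ℝ) ≤ C := by
    intro x
    calc lam * (nn x : ℝ) ≤ C / nS * nS :=
        mul_le_mul hlamlt.le (hnnle x) (Nat.cast_nonneg _) (by positivity)
      _ = C := div_mul_cancel₀ _ (ne_of_gt hnS0)
  -- the new strategy
  set y' : S → B → ℝ := fun x b => w x b + (lam * (nn x : ℝ)) * ζ b with hy'def
  have hyb01 : ∀ x b, 0 ≤ y x b ∧ y x b ≤ 1 := by
    intro x b
    refine ⟨hy.1 x b, ?_⟩
    have h1 : y x b ≤ ∑ b', y x b' :=
      Finset.single_le_sum (f := fun b' => y x b') (fun b' _ => hy.1 x b') (Finset.mem_univ b)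
    linarith [hy.2 x]
  refine ⟨y', ?_, ?_, ?_, ?_⟩
  · -- IsStrategy
    constructor
    · intro x b
      have h1 : 0 ≤ (1 - t) * y x b := mul_nonneg (by linarith) (hy.1 x b)
      have h2 : -(β/2) ≤ τ * ut x b := by
        have hb := hM1 x b
        have habs : |τ * ut x b| ≤ τ * M1 := by
          rw [abs_mul, abs_of_pos hτ0]
          exact mul_le_mul_of_nonneg_left hb hτ0.le
        obtain ⟨ha1, ha2⟩ := abs_le.mp habs
        exact le_trans (neg_le_neg hτM) ha1
      have h3 : -(β/2) ≤ (lam * (nn x : ℝ)) * ζ b := by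
        have habs : |(lam * (nn x : ℝ)) * ζ b| ≤ C := by
          rw [abs_mul, abs_of_nonneg (hlamnn x)]
          calc lam * (nn x : ℝ) * |ζ b| ≤ lam * (nn x : ℝ) * 1 :=
              mul_le_mul_of_nonneg_left (hζabs b) (hlamnn x)
            _ = lam * (nn x : ℝ) := mul_one _
            _ ≤ C := hlamC x
        obtain ⟨ha1, ha2⟩ := abs_le.mp habs
        exact le_trans (neg_le_neg hCβ) ha1
      have h4 : β ≤ t / Bn := hβt
      simp only [hy'def, hwdef]
      linarith
    · intro x
      have e1 : ∀ b, y' x b = (1 - t) * y x b + t / Bn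
          + (τ * ut x b + (lam * (nn x : ℝ)) * ζ b) := by
        intro b; simp only [hy'def, hwdef]; ring
      rw [Finset.sum_congr rfl fun b _ => e1 b]
      rw [Finset.sum_add_distrib, Finset.sum_add_distrib, Finset.sum_add_distrib,
        ← Finset.mul_sum, ← Finset.mul_sum, ← Finset.mul_sum, hy.2 x, hutsum, hζsum,
        Finset.sum_const, Finset.card_univ, nsmul_eq_mul, ← hBndef]
      field_simp
      ring
  · -- norm
    rw [pi_norm_lt_iff hε]
    intro x
    rw [pi_norm_lt_iff hε]
    intro b
    simp only [Pi.sub_apply, Real.norm_eq_abs]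
    have h0 : y' x b - y x b = (t / Bn - t * y x b) + τ * ut x b
        + (lam * (nn x : ℝ)) * ζ b := by
      simp only [hy'def, hwdef]; ring
    obtain ⟨hyb0, hyb1⟩ := hyb01 x b
    have h1 : |t / Bn - t * y x b| ≤ t := by
      rw [abs_sub_le_iff]
      have htBn : t / Bn ≤ t := by
        calc t / Bn ≤ t / 1 := div_le_div_of_nonneg_left ht0.le one_pos hBn1
          _ = t := div_one t
      have hty0 : 0 ≤ t * y x b := mul_nonneg ht0.le hyb0
      have hty1 : t * y x b ≤ t := by nlinarith
      have htBn0 : 0 ≤ t / Bn := le_of_lt (div_pos ht0 hBn0)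
      exact ⟨by linarith, by linarith⟩
    have h2 : |τ * ut x b| ≤ β / 2 := by
      rw [abs_mul, abs_of_pos hτ0]
      calc τ * |ut x b| ≤ τ * M1 := mul_le_mul_of_nonneg_left (hM1 x b) hτ0.le
        _ ≤ β / 2 := hτM
    have h3 : |(lam * (nn x : ℝ)) * ζ b| ≤ β / 2 := by
      rw [abs_mul, abs_of_nonneg (hlamnn x)]
      calc lam * (nn x : ℝ) * |ζ b| ≤ lam * (nn x : ℝ) * 1 :=
          mul_le_mul_of_nonneg_left (hζabs b) (hlamnn x)
        _ = lam * (nn x : ℝ) := mul_one _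
        _ ≤ C := hlamC x
        _ ≤ β / 2 := hCβ
    calc |y' x b - y x b| ≤ t + β/2 + β/2 := by
          rw [h0]
          refine le_trans (abs_add_le _ _) ?_
          exact add_le_add (le_trans (abs_add_le _ _) (add_le_add h1 h2)) h3
      _ < ε := by linarith
  · -- injective
    intro x x' hxx'
    by_contra hne
    have hnn : (nn x : ℝ) ≠ (nn x' : ℝ) := by
      intro h
      exact hne (hnninj (by exact_mod_cast h))
    have hb1eq : y' x b1 = y' x' b1 := congrFun hxx' b1
    have hζ1 : ζ b1 = 1 := by simp [hζdef, hb12]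
    have key : lam * ((nn x : ℝ) - (nn x' : ℝ)) = w x' b1 - w x b1 := by
      simp only [hy'def, hζ1, mul_one] at hb1eq
      linarith
    have hlameq : lam = (w x' b1 - w x b1) / ((nn x : ℝ) - (nn x' : ℝ)) := by
      rw [eq_div_iff (sub_ne_zero.mpr hnn)]
      linarith [key]
    apply hlamBad
    rw [hBaddef]
    simp only [Finset.coe_image, Set.mem_image, Finset.mem_coe]
    exact ⟨(x, x'), by simp, hlameq.symm⟩
  · -- main inequality
    intro μ hμ
    obtain ⟨hμ0, hμsum, hμrow, hμcol⟩ := hμ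
    set gp : S → S → ℝ := fun s x => ∑ b, ut x b * ut s b with hgpdef
    set hz : S → ℝ := fun s => ∑ b, ζ b * ut s b with hhzdef
    have L1 : ∀ P : S → ℝ, ∑ s, ∑ x, μ (s, x) * P s = ∑ s, m s * P s := by
      intro P
      refine Finset.sum_congr rfl fun s _ => ?_
      rw [← Finset.sum_mul, hμrow s]
    have L2 : ∀ Q : S → ℝ, ∑ s, ∑ x, μ (s, x) * Q x = ∑ x, m x * Q x := by
      intro Q
      rw [Finset.sum_comm]
      refine Finset.sum_congr rfl fun x _ => ?_
      rw [← Finset.sum_mul, hμcol x]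
    have L0 : ∀ W : S → S → ℝ, ∑ s, ∑ x, mu0 m (s, x) * W s x = ∑ s, m s * W s s := by
      intro W
      refine Finset.sum_congr rfl fun s _ => ?_
      rw [Finset.sum_eq_single s]
      · simp [mu0]
      · intro x _ hxs
        have hne : ¬ (s = x) := fun h => hxs h.symm
        simp [mu0, hne]
      · intro h; exact absurd (Finset.mem_univ s) h
    -- pointwise decomposition of the inner sum
    have ha : ∀ s x, ∑ b, y' x b * u1 (s, b)
        = (1 - t) * (∑ b, y x b * u1 (s, b)) + t * ub s + τ * gp s x
          + (lam * (nn x : ℝ)) * hz s := by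
      intro s x
      have e1 : ∀ b, y' x b * u1 (s, b)
          = (1 - t) * (y x b * u1 (s, b)) + (t / Bn) * u1 (s, b)
            + τ * (ut x b * u1 (s, b)) + (lam * (nn x : ℝ)) * (ζ b * u1 (s, b)) := by
        intro b; simp only [hy'def, hwdef]; ring
      rw [Finset.sum_congr rfl fun b _ => e1 b]
      rw [Finset.sum_add_distrib, Finset.sum_add_distrib, Finset.sum_add_distrib,
        ← Finset.mul_sum, ← Finset.mul_sum, ← Finset.mul_sum, ← Finset.mul_sum]
      have e2 : ∑ b, ut x b * u1 (s, b) = gp s x := by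
        rw [hpoint (ut x) (hutsum x) s]
      have e3 : ∑ b, ζ b * u1 (s, b) = hz s := by
        rw [hpoint ζ hζsum s]
      rw [e2, e3]
      have e4 : (t / Bn) * ∑ b, u1 (s, b) = t * ub s := by
        rw [hubdef]; ring
      rw [e4]
    -- decomposition of Upay for any measure
    have hUdec : ∀ ν : S × S → ℝ, Upay u1 ν y'
        = (1 - t) * (∑ s, ∑ x, ν (s, x) * ∑ b, y x b * u1 (s, b))
          + (∑ s, ∑ x, ν (s, x) * (t * ub s))
          + τ * (∑ s, ∑ x, ν (s, x) * gp s x)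
          + (∑ s, ∑ x, ν (s, x) * ((lam * (nn x : ℝ)) * hz s)) := by
      intro ν
      have e5 : ∀ s x, ν (s, x) * (∑ b, y' x b * u1 (s, b))
          = (1 - t) * (ν (s, x) * ∑ b, y x b * u1 (s, b)) + ν (s, x) * (t * ub s)
            + τ * (ν (s, x) * gp s x) + ν (s, x) * ((lam * (nn x : ℝ)) * hz s) := by
        intro s x; rw [ha s x]; ring
      calc Upay u1 ν y' = ∑ s, ∑ x, ν (s, x) * ∑ b, y' x b * u1 (s, b) := rfl
        _ = ∑ s, ∑ x, ((1 - t) * (ν (s, x) * ∑ b, y x b * u1 (s, b)) + ν (s, x) * (t * ub s)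
            + τ * (ν (s, x) * gp s x) + ν (s, x) * ((lam * (nn x : ℝ)) * hz s)) :=
          Finset.sum_congr rfl fun s _ => Finset.sum_congr rfl fun x _ => e5 s x
        _ = _ := by
          simp only [Finset.sum_add_distrib, ← Finset.mul_sum]
    have hUy : Upay u1 μ y = ∑ s, ∑ x, μ (s, x) * ∑ b, y x b * u1 (s, b) := rfl
    have hUy0 : Upay u1 (mu0 m) y = ∑ s, ∑ x, mu0 m (s, x) * ∑ b, y x b * u1 (s, b) := rfl
    -- identities for the diagonal copula
    have hBdec : Upay u1 (mu0 m) y'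
        = (1 - t) * Upay u1 (mu0 m) y + (∑ s, m s * (t * ub s))
          + τ * (∑ s, m s * gp s s) + (∑ s, m s * ((lam * (nn s : ℝ)) * hz s)) := by
      rw [hUdec (mu0 m), L0 (fun s x => t * ub s), L0 gp,
        L0 (fun s x => (lam * (nn x : ℝ)) * hz s), hUy0]
    have hAdec : Upay u1 μ y'
        = (1 - t) * Upay u1 μ y + (∑ s, m s * (t * ub s))
          + τ * (∑ s, ∑ x, μ (s, x) * gp s x)
          + (∑ s, ∑ x, μ (s, x) * ((lam * (nn x : ℝ)) * hz s)) := by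
      rw [hUdec μ, L1 (fun s => t * ub s), hUy]
    -- square expansion
    have hD2exp : ∀ s x, D2 s x = gp s s + gp x x - 2 * gp s x := by
      intro s x
      simp only [hD2def, hgpdef]
      rw [Finset.mul_sum, ← Finset.sum_add_distrib, ← Finset.sum_sub_distrib]
      refine Finset.sum_congr rfl fun b _ => ?_
      ring
    -- the error-term identity
    have hE : ∑ s, ∑ x, μ (s, x) * (τ * D2 s x / 2 + (lam * (nn x : ℝ)) * (hz x - hz s))
        = τ * (∑ s, m s * gp s s) - τ * (∑ s, ∑ x, μ (s, x) * gp s x)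
          + (∑ s, m s * ((lam * (nn s : ℝ)) * hz s))
          - (∑ s, ∑ x, μ (s, x) * ((lam * (nn x : ℝ)) * hz s)) := by
      have e6 : ∀ s x, μ (s, x) * (τ * D2 s x / 2 + (lam * (nn x : ℝ)) * (hz x - hz s))
          = (τ/2) * (μ (s, x) * gp s s) + (τ/2) * (μ (s, x) * gp x x)
            - τ * (μ (s, x) * gp s x)
            + μ (s, x) * ((lam * (nn x : ℝ)) * hz x)
            - μ (s, x) * ((lam * (nn x : ℝ)) * hz s) := by
        intro s x; rw [hD2exp s x]; ring
      rw [Finset.sum_congr rfl fun s _ =>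
        Finset.sum_congr rfl fun x _ => e6 s x]
      simp only [Finset.sum_add_distrib, Finset.sum_sub_distrib, ← Finset.mul_sum]
      have g1 : ∑ s, ∑ x, μ (s, x) * gp s s = ∑ s, m s * gp s s := L1 (fun s => gp s s)
      have g2 : ∑ s, ∑ x, μ (s, x) * gp x x = ∑ x, m x * gp x x := L2 (fun x => gp x x)
      have g3 : ∑ s, ∑ x, μ (s, x) * ((lam * (nn x : ℝ)) * hz x)
          = ∑ x, m x * ((lam * (nn x : ℝ)) * hz x) := L2 (fun x => (lam * (nn x : ℝ)) * hz x)
      rw [g1, g2, g3]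
      ring
    -- per-term nonnegativity
    have hzval : ∀ s, hz s = ut s b1 - ut s b2 := by
      intro s
      simp only [hhzdef]
      exact hζval (fun b => ut s b)
    have hterm : ∀ s x, 0 ≤ τ * D2 s x / 2 + (lam * (nn x : ℝ)) * (hz x - hz s) := by
      intro s x
      by_cases hD : D2 s x = 0
      · have hall : ∀ b, ut s b - ut x b = 0 := by
          intro b
          have hDex : ∑ b, (ut s b - ut x b)^2 = 0 := by
            rw [← hD]
          have hb := (Finset.sum_eq_zero_iff_of_nonneg
            (fun b _ => sq_nonneg (ut s b - ut x b))).mp hDex b (Finset.mem_univ b)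
          exact (pow_eq_zero_iff two_ne_zero).mp hb
        have hzz : hz x - hz s = 0 := by
          have h1 := hall b1
          have h2 := hall b2
          rw [hzval s, hzval x]
          linarith
        rw [hD, hzz]
        simp
      · have h1 : δ0 ≤ D2 s x := hδ0le s x hD
        have h2 : |hz x - hz s| ≤ 4 * M1 := by
          rw [hzval s, hzval x]
          obtain ⟨a1, a2⟩ := abs_le.mp (hM1 x b1)
          obtain ⟨a3, a4⟩ := abs_le.mp (hM1 x b2)
          obtain ⟨a5, a6⟩ := abs_le.mp (hM1 s b1)
          obtain ⟨a7, a8⟩ := abs_le.mp (hM1 s b2)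
          rw [abs_le]
          constructor <;> linarith
        have h3 : |(lam * (nn x : ℝ)) * (hz x - hz s)| ≤ C * (4 * M1) := by
          rw [abs_mul, abs_of_nonneg (hlamnn x)]
          exact mul_le_mul (hlamC x) h2 (abs_nonneg _) hC0.le
        obtain ⟨h4, h5⟩ := abs_le.mp h3
        have h6 : τ * δ0 ≤ τ * D2 s x := mul_le_mul_of_nonneg_left h1 hτ0.le
        linarith
    have hsum0 : 0 ≤ ∑ s, ∑ x, μ (s, x) * (τ * D2 s x / 2
        + (lam * (nn x : ℝ)) * (hz x - hz s)) :=
      Finset.sum_nonneg fun s _ => Finset.sum_nonneg fun x _ =>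
        mul_nonneg (hμ0 (s, x)) (hterm s x)
    have hbase := hC1 μ ⟨hμ0, hμsum, hμrow, hμcol⟩
    have h1t : (1 - t) * Upay u1 μ y ≤ (1 - t) * Upay u1 (mu0 m) y :=
      mul_le_mul_of_nonneg_left hbase (by linarith)
    linarith [hAdec, hBdec, hE, hsum0, h1t]
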